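/- In a random game G(2,n) with n ≥ 1, the number of Column actions surviving iterated elimination satisfies: Pr(S^C(2,n) = 1) = (2n−1)!!/(2^{n−1}·n!), and for every k with 2 ≤ k ≤ n, Pr(S^C(2,n) = k) = (s(n,k)/n!)·(1 − 1/2^{k−1}). -/

import Mathlib

open Finset Filter

noncomputable section

/-- Row action `i` is strictly dominated in the restricted game with Row actions `X`
and Column actions `Y`, for Row payoff matrix `R`. -/
def RowDomIn {m n : ℕ} (R : Fin m → Fin n → ℝ) (X : Finset (Fin m)) (Y : Finset (Fin n))
    (i : Fin m) : Prop :=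
  ∃ i' ∈ X, ∀ j ∈ Y, R i j < R i' j

/-- Column action `j` is strictly dominated in the restricted game with Row actions `X`
and Column actions `Y`, for Column payoff matrix `C`. -/
def ColDomIn {m n : ℕ} (C : Fin m → Fin n → ℝ) (X : Finset (Fin m)) (Y : Finset (Fin n))
    (j : Fin n) : Prop :=
  ∃ j' ∈ Y, ∀ i ∈ X, C i j < C i j'

open Classical in
/-- One round of iterated elimination: simultaneously delete every strictly dominated
action of both players in the current restricted game. -/
def elimStep {m n : ℕ} (R C : Fin m → Fin n → ℝ)
    (p : Finset (Fin m) × Finset (Fin n)) : Finset (Fin m) × Finset (Fin n) :=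
  (p.1.filter fun i => ¬ RowDomIn R p.1 p.2 i,
   p.2.filter fun j => ¬ ColDomIn C p.1 p.2 j)

/-- Surviving actions of the subgame `(p.1, p.2)` after iterated elimination of strictly
dominated actions (iterating `m + n` times surely reaches the fixed point). -/
def survivorsFrom {m n : ℕ} (R C : Fin m → Fin n → ℝ)
    (p : Finset (Fin m) × Finset (Fin n)) : Finset (Fin m) × Finset (Fin n) :=
  (elimStep R C)^[m + n] p

/-- The subgame `(p.1, p.2)` is strict-dominance solvable: exactly one action of each
player survives iterated elimination of strictly dominated actions. -/
def SolvableFrom {m n : ℕ} (R C : Fin m → Fin n → ℝ)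
    (p : Finset (Fin m) × Finset (Fin n)) : Prop :=
  (survivorsFrom R C p).1.card = 1 ∧ (survivorsFrom R C p).2.card = 1

/-- Surviving actions of the full game after iterated elimination. -/
def survivors {m n : ℕ} (R C : Fin m → Fin n → ℝ) : Finset (Fin m) × Finset (Fin n) :=
  survivorsFrom R C (Finset.univ, Finset.univ)

/-- The game is strict-dominance solvable. -/
def Solvable {m n : ℕ} (R C : Fin m → Fin n → ℝ) : Prop :=
  SolvableFrom R C (Finset.univ, Finset.univ)

/-- The number of rounds performed by the iterated elimination procedure:
the least `k` such that round `k + 1` deletes nothing more. -/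
def elimRounds {m n : ℕ} (R C : Fin m → Fin n → ℝ) : ℕ :=
  sInf {k | (elimStep R C)^[k + 1] (Finset.univ, Finset.univ)
          = (elimStep R C)^[k] (Finset.univ, Finset.univ)}

/-- Sample space of the random game `G(m,n)`: for each Column action an i.i.d. uniform
permutation giving Row's ordinal payoffs in that column, and for each Row action an
i.i.d. uniform permutation giving Column's ordinal payoffs in that row. -/
abbrev Omega (m n : ℕ) := (Fin n → Equiv.Perm (Fin m)) × (Fin m → Equiv.Perm (Fin n))

/-- Row's payoff matrix of the realized game. -/
def RPay {m n : ℕ} (ω : Omega m n) : Fin m → Fin n → ℝ := fun i j => ((ω.1 j) i : ℕ)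

/-- Column's payoff matrix of the realized game. -/
def CPay {m n : ℕ} (ω : Omega m n) : Fin m → Fin n → ℝ := fun i j => ((ω.2 i) j : ℕ)

/-- Probability of an event under the uniform distribution on `Omega m n`
(i.e. all `m + n` permutations uniform and mutually independent). -/
def Pr {m n : ℕ} (E : Set (Omega m n)) : ℝ :=
  (E.toFinite.toFinset.card : ℝ) / (Fintype.card (Omega m n) : ℝ)

open Classical in
/-- Number of Row actions that are not strictly dominated. -/
def UR {m n : ℕ} (ω : Omega m n) : ℕ :=
  (Finset.univ.filter fun i => ¬ RowDomIn (RPay ω) Finset.univ Finset.univ i).card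

open Classical in
/-- Number of Column actions that are not strictly dominated. -/
def UC {m n : ℕ} (ω : Omega m n) : ℕ :=
  (Finset.univ.filter fun j => ¬ ColDomIn (CPay ω) Finset.univ Finset.univ j).card

/-- Number of Row actions surviving iterated elimination. -/
def SR {m n : ℕ} (ω : Omega m n) : ℕ := (survivors (RPay ω) (CPay ω)).1.card

/-- Number of Column actions surviving iterated elimination. -/
def SC {m n : ℕ} (ω : Omega m n) : ℕ := (survivors (RPay ω) (CPay ω)).2.card

/-- The realized game is strict-dominance solvable. -/
def GameSolvable {m n : ℕ} (ω : Omega m n) : Prop := Solvable (RPay ω) (CPay ω)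

/-- Number of rounds of the iterated elimination procedure in the realized game. -/
def GameRounds {m n : ℕ} (ω : Omega m n) : ℕ := elimRounds (RPay ω) (CPay ω)

/-- `π(m,n)`: probability that the random game `G(m,n)` is strict-dominance solvable. -/
def probSolvable (m n : ℕ) : ℝ := Pr {ω : Omega m n | GameSolvable ω}

/-- Expected number of Column's strictly undominated actions, `E[U^C(m,n)]`. -/
def expUC (m n : ℕ) : ℝ :=
  (∑ ω : Omega m n, (UC ω : ℝ)) / (Fintype.card (Omega m n) : ℝ)

/-- Expected number of Column actions surviving iterated elimination, `E[S^C(m,n)]`. -/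
def expSC (m n : ℕ) : ℝ :=
  (∑ ω : Omega m n, (SC ω : ℝ)) / (Fintype.card (Omega m n) : ℝ)

open Classical in
/-- `E[I(m,n)]`: expected number of elimination rounds conditional on the game being
strict-dominance solvable. -/
def condExpRounds (m n : ℕ) : ℝ :=
  (∑ ω : Omega m n, if GameSolvable ω then (GameRounds ω : ℝ) else 0) /
    (∑ ω : Omega m n, if GameSolvable ω then (1 : ℝ) else 0)

/-- Unsigned Stirling numbers of the first kind. -/
def stirling1 : ℕ → ℕ → ℕ
  | 0, 0 => 1
  | 0, _ + 1 => 0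
  | _ + 1, 0 => 0
  | n + 1, k + 1 => n * stirling1 n (k + 1) + stirling1 n k

end


namespace S8
open Finset Equiv

def rtlSet {N : ℕ} (σ : Equiv.Perm (Fin N)) : Finset (Fin N) :=
  Finset.univ.filter (fun a => ∀ b, a < b → σ b < σ a)

lemma mem_rtlSet {N : ℕ} {σ : Equiv.Perm (Fin N)} {a : Fin N} :
    a ∈ rtlSet σ ↔ ∀ b, a < b → σ b < σ a := by simp [rtlSet]

def rtl {N : ℕ} (σ : Equiv.Perm (Fin N)) : ℕ := (rtlSet σ).card

def insE {N : ℕ} (q : Fin (N+1)) (e : Equiv.Perm (Fin N)) : Equiv.Perm (Fin (N+1)) :=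
  ((finSuccEquiv' q).trans (Equiv.optionCongr e)).trans (finSuccEquiv' (0 : Fin (N+1))).symm

lemma insE_at {N : ℕ} (q : Fin (N+1)) (e : Equiv.Perm (Fin N)) : insE q e q = 0 := by
  simp [insE]

lemma insE_succAbove {N : ℕ} (q : Fin (N+1)) (e : Equiv.Perm (Fin N)) (i : Fin N) :
    insE q e (q.succAbove i) = (e i).succ := by
  simp [insE, Fin.succAbove_zero]

lemma insE_ne {N : ℕ} (q : Fin (N+1)) (e : Equiv.Perm (Fin N)) {j : Fin (N+1)} (h : j ≠ q) :
    ∃ i, j = q.succAbove i ∧ insE q e j = (e i).succ := by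
  obtain ⟨i, hi⟩ := Fin.exists_succAbove_eq h
  exact ⟨i, hi.symm, by rw [← hi, insE_succAbove]⟩

lemma rtlSet_insE {N : ℕ} (q : Fin (N+1)) (e : Equiv.Perm (Fin N)) :
    rtlSet (insE q e) =
      (rtlSet e).image q.succAbove ∪ (if q = Fin.last N then {q} else ∅) := by
  ext j
  simp only [Finset.mem_union, Finset.mem_image]
  constructor
  · intro hj
    rw [mem_rtlSet] at hj
    by_cases hjq : j = q
    · subst hjq
      right
      have hl : j = Fin.last N := by
        by_contra hne
        have : j < Fin.last N := Fin.lt_last_iff_ne_last.mpr hne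
        have := hj _ this
        rw [insE_at] at this
        exact absurd this (Fin.not_lt_zero _)
      simp [hl]
    · obtain ⟨i, rfl, -⟩ := insE_ne q e hjq
      left
      refine ⟨i, ?_, rfl⟩
      rw [mem_rtlSet]
      intro b hb
      have := hj _ (Fin.succAbove_lt_succAbove_iff.mpr hb)
      rw [insE_succAbove, insE_succAbove] at this
      exact Fin.succ_lt_succ_iff.mp this
  · intro hj
    rw [mem_rtlSet]
    rcases hj with ⟨i, hi, rfl⟩ | hj
    · intro b hb
      rw [insE_succAbove]
      by_cases hbq : b = q
      · subst hbq; rw [insE_at]; exact Fin.succ_pos _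
      · obtain ⟨i', rfl, hv⟩ := insE_ne q e hbq
        rw [hv]
        rw [mem_rtlSet] at hi
        exact Fin.succ_lt_succ_iff.mpr (hi _ (Fin.succAbove_lt_succAbove_iff.mp hb))
    · split at hj
      · next hq =>
        simp only [Finset.mem_singleton] at hj
        subst hj
        intro b hb
        exact absurd (hq ▸ hb) (Fin.not_lt.mpr (Fin.le_last b))
      · simp at hj

lemma rtl_insE {N : ℕ} (q : Fin (N+1)) (e : Equiv.Perm (Fin N)) :
    rtl (insE q e) = rtl e + (if q = Fin.last N then 1 else 0) := by
  rw [rtl, rtlSet_insE, Finset.card_union_of_disjoint, Finset.card_image_of_injective _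
    Fin.succAbove_right_injective]
  · congr 1
    split <;> simp
  · split
    · simp only [Finset.disjoint_singleton_right, Finset.mem_image]
      rintro ⟨i, -, hi⟩
      exact Fin.succAbove_ne q i hi
    · simp

lemma insE_injective {N : ℕ} : Function.Injective
    (fun p : Fin (N+1) × Equiv.Perm (Fin N) => insE p.1 p.2) := by
  rintro ⟨q, e⟩ ⟨q', e'⟩ h
  simp only [Prod.mk.injEq]
  have hq : q = q' := by
    by_contra hne
    obtain ⟨i, hi, hv⟩ := insE_ne q' e' hne
    have h0 : insE q e q = 0 := insE_at q e
    have h' : insE q' e' q = 0 := by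
      have := congrArg (fun σ : Equiv.Perm (Fin (N+1)) => σ q) h
      simpa using this.symm.trans h0
    rw [hv] at h'
    rename' h' => h0
    exact Fin.succ_ne_zero _ h0
  subst hq
  refine ⟨rfl, Equiv.ext fun i => ?_⟩
  have := congrArg (fun σ : Equiv.Perm (Fin (N+1)) => σ (q.succAbove i)) h
  simp only [insE_succAbove] at this
  exact Fin.succ_injective _ this

lemma insE_surjective {N : ℕ} (σ : Equiv.Perm (Fin (N+1))) :
    ∃ q e, insE q e = σ := by
  refine ⟨σ.symm 0, ?_⟩
  set q := σ.symm 0 with hq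
  have hσq : σ q = 0 := σ.apply_symm_apply 0
  set T : Option (Fin N) ≃ Option (Fin N) :=
    ((finSuccEquiv' q).symm.trans (σ.trans (finSuccEquiv' (0 : Fin (N+1))))) with hT
  have hTnone : T none = none := by
    simp [hT, hσq]
  refine ⟨Equiv.removeNone T, ?_⟩
  apply Equiv.ext
  intro j
  by_cases hjq : j = q
  · subst hjq; rw [insE_at, hσq]
  · obtain ⟨i, hi⟩ := Fin.exists_succAbove_eq hjq
    rw [← hi, insE_succAbove]
    have hne : T (some i) ≠ none := fun h' => by
      have := T.injective (h'.trans hTnone.symm); simp at this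
    obtain ⟨a, h'⟩ := Option.ne_none_iff_exists'.mp hne
    have hsome : T (some i) = some (Equiv.removeNone T i) :=
      (Equiv.removeNone_some T ⟨a, h'⟩).symm
    have : finSuccEquiv' (0 : Fin (N+1)) (σ (q.succAbove i)) = some (Equiv.removeNone T i) := by
      have : T (some i) = finSuccEquiv' (0 : Fin (N+1)) (σ (q.succAbove i)) := by
        simp [hT]
      rw [← this, hsome]
    have := congrArg (finSuccEquiv' (0 : Fin (N+1))).symm this
    rw [Equiv.symm_apply_apply] at this
    rw [this]
    simp [Fin.succAbove_zero]

lemma card_filter_prod {α β : Type*} [Fintype α] [Fintype β] [DecidableEq α]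
    (P : α → β → Prop) [∀ a b, Decidable (P a b)] :
    ((univ : Finset (α × β)).filter (fun p => P p.1 p.2)).card
      = ∑ a : α, ((univ : Finset β).filter (fun b => P a b)).card := by
  rw [Finset.card_eq_sum_card_fiberwise (f := Prod.fst) (t := univ) (fun x _ => mem_univ _)]
  refine Finset.sum_congr rfl fun a _ => ?_
  refine Finset.card_bij' (fun p _ => p.2) (fun b _ => (a, b)) ?_ ?_ ?_ ?_
  · intro p hp
    obtain ⟨x, y⟩ := p
    simp only [Finset.mem_filter, Finset.mem_univ, true_and] at hp ⊢
    exact hp.2 ▸ hp.1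
  · intro b hb
    simp only [Finset.mem_filter, Finset.mem_univ, true_and, and_true] at hb ⊢
    exact hb
  · intro p hp
    obtain ⟨x, y⟩ := p
    simp only [Finset.mem_filter, Finset.mem_univ, true_and] at hp
    show (a, y) = (x, y)
    rw [hp.2]
  · intro b hb; rfl

lemma stirling1_eq_zero_of_lt : ∀ {N k : ℕ}, N < k → stirling1 N k = 0 := by
  intro N
  induction N with
  | zero => intro k hk; match k, hk with | k+1, _ => rfl
  | succ N ih =>
    intro k hk
    match k, hk with
    | k+1, hk =>
      have h1 : N < k + 1 := by omega
      have h2 : N < k := by omega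
      show N * stirling1 N (k+1) + stirling1 N k = 0
      rw [ih h1, ih h2]; simp

lemma card_rtl (N k : ℕ) :
    ((univ : Finset (Equiv.Perm (Fin N))).filter (fun σ => rtl σ = k)).card
      = stirling1 N k := by
  induction N generalizing k with
  | zero =>
    have h0 : ∀ σ : Equiv.Perm (Fin 0), rtl σ = 0 := by
      intro σ; simp [rtl, rtlSet]
    cases k with
    | zero =>
      rw [Finset.filter_true_of_mem fun σ _ => h0 σ]
      simp [Finset.card_univ, Fintype.card_perm]
      rfl
    | succ k =>
      rw [Finset.filter_false_of_mem fun σ _ => by rw [h0 σ]; omega]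
      rfl
  | succ N ih =>
    have key : ((univ : Finset (Equiv.Perm (Fin (N+1)))).filter (fun σ => rtl σ = k)).card
        = ((univ : Finset (Fin (N+1) × Equiv.Perm (Fin N))).filter
            (fun p => rtl p.2 + (if p.1 = Fin.last N then 1 else 0) = k)).card := by
      refine (Finset.card_bij (fun p _ => insE p.1 p.2) ?_ ?_ ?_).symm
      · intro p hp
        simp only [Finset.mem_filter, Finset.mem_univ, true_and] at hp ⊢
        rw [rtl_insE]; exact hp
      · intro p hp p' hp' h
        exact insE_injective h
      · intro σ hσ
        simp only [Finset.mem_filter, Finset.mem_univ, true_and] at hσ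
        obtain ⟨q, e, he⟩ := insE_surjective σ
        refine ⟨(q, e), ?_, he⟩
        simp only [Finset.mem_filter, Finset.mem_univ, true_and]
        rw [← rtl_insE, he]; exact hσ
    have step2 : ((univ : Finset (Fin (N+1) × Equiv.Perm (Fin N))).filter
        (fun p => rtl p.2 + (if p.1 = Fin.last N then 1 else 0) = k)).card
        = ∑ q : Fin (N+1), ((univ : Finset (Equiv.Perm (Fin N))).filter
            (fun e => rtl e + (if q = Fin.last N then 1 else 0) = k)).card :=
      card_filter_prod (fun q e => rtl e + (if q = Fin.last N then 1 else 0) = k)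
    rw [key, step2]
    rw [← Finset.add_sum_erase _ _ (Finset.mem_univ (Fin.last N))]
    have hlast : ((univ : Finset (Equiv.Perm (Fin N))).filter
        (fun e => rtl e + (if Fin.last N = Fin.last N then 1 else 0) = k)).card
        = (match k with | 0 => 0 | k'+1 => stirling1 N k') := by
      cases k with
      | zero =>
        rw [Finset.filter_false_of_mem fun e _ => by simp]
        rfl
      | succ k' =>
        have heq : (univ : Finset (Equiv.Perm (Fin N))).filter
            (fun e => (rtl e + if Fin.last N = Fin.last N then 1 else 0) = k' + 1)
            = (univ : Finset (Equiv.Perm (Fin N))).filter (fun e => rtl e = k') :=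
          Finset.filter_congr (fun e _ => by simp)
        rw [heq]
        exact ih k'
    have herase : ∑ q ∈ (univ : Finset (Fin (N+1))).erase (Fin.last N),
        ((univ : Finset (Equiv.Perm (Fin N))).filter
          (fun e => (rtl e + if q = Fin.last N then 1 else 0) = k)).card
        = N * stirling1 N k := by
      have hconst : ∀ q ∈ (univ : Finset (Fin (N+1))).erase (Fin.last N),
          ((univ : Finset (Equiv.Perm (Fin N))).filter
            (fun e => (rtl e + if q = Fin.last N then 1 else 0) = k)).card
          = stirling1 N k := by
        intro q hq
        have hq' : q ≠ Fin.last N := (Finset.mem_erase.mp hq).1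
        have heq : (univ : Finset (Equiv.Perm (Fin N))).filter
            (fun e => (rtl e + if q = Fin.last N then 1 else 0) = k)
            = (univ : Finset (Equiv.Perm (Fin N))).filter (fun e => rtl e = k) :=
          Finset.filter_congr (fun e _ => by simp [hq'])
        rw [heq]
        exact ih k
      rw [Finset.sum_congr rfl hconst, Finset.sum_const,
        Finset.card_erase_of_mem (Finset.mem_univ _), Finset.card_univ, Fintype.card_fin]
      simp [smul_eq_mul]
    rw [hlast, herase]
    cases k with
    | zero =>
      cases N with
      | zero => simp [stirling1]
      | succ N => simp [stirling1, stirling1_eq_zero_of_lt]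
    | succ k' =>
      show stirling1 N k' + N * stirling1 N (k'+1) = stirling1 (N+1) (k'+1)
      rw [show stirling1 (N+1) (k'+1) = N * stirling1 N (k'+1) + stirling1 N k' from rfl]
      omega

lemma df_identity (n : ℕ) :
    ∑ k ∈ Finset.range (n+1), stirling1 n k * 2^(n - k)
      = Nat.doubleFactorial (2*n - 1) := by
  induction n with
  | zero => decide
  | succ n ih =>
    cases n with
    | zero => decide
    | succ m =>
      set n := m + 1 with hn
      rw [Finset.sum_range_succ']
      have h0 : stirling1 (n+1) 0 * 2^(n+1-0) = 0 := by rw [show stirling1 (n+1) 0 = 0 from rfl]; ring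
      rw [h0, add_zero]
      have hterm : ∀ k ∈ Finset.range (n+1),
          stirling1 (n+1) (k+1) * 2^(n+1-(k+1))
          = n * (stirling1 n (k+1) * 2^(n-k)) + stirling1 n k * 2^(n-k) := by
        intro k hk
        rw [show stirling1 (n+1) (k+1) = n * stirling1 n (k+1) + stirling1 n k from rfl]
        have : n + 1 - (k+1) = n - k := by omega
        rw [this]; ring
      rw [Finset.sum_congr rfl hterm, Finset.sum_add_distrib, ih, ← Finset.mul_sum]
      have hshift : ∑ k ∈ Finset.range (n+1), stirling1 n (k+1) * 2^(n-k)
          = 2 * Nat.doubleFactorial (2*n - 1) := by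
        rw [Finset.sum_range_succ]
        rw [stirling1_eq_zero_of_lt (by omega), zero_mul, add_zero]
        have : ∀ k ∈ Finset.range n, stirling1 n (k+1) * 2^(n-k)
            = 2 * (stirling1 n (k+1) * 2^(n-1-k)) := by
          intro k hk
          simp only [Finset.mem_range] at hk
          have : n - k = (n - 1 - k) + 1 := by omega
          rw [this, pow_succ]; ring
        rw [Finset.sum_congr rfl this, ← Finset.mul_sum]
        congr 1
        have := ih
        rw [Finset.sum_range_succ'] at this
        rw [show stirling1 n 0 * 2^(n-0) = 0 by
          rw [show stirling1 n 0 = 0 from by rw [hn]; rfl]; ring, add_zero] at this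
        rw [← this]
        refine Finset.sum_congr rfl fun k hk => ?_
        simp only [Finset.mem_range] at hk
        congr 2
        omega
      rw [hshift]
      have h2 : 2 * (n+1) - 1 = (2*n - 1) + 2 := by omega
      rw [h2, Nat.doubleFactorial_add_two]
      have h3 : 2*n - 1 + 2 = 2*n + 1 := by omega
      rw [h3]
      ring

end S8


namespace S8
open Finset Equiv

variable {n : ℕ}

lemma perm2_eq_zero : ∀ (π : Equiv.Perm (Fin 2)) (i i' : Fin 2), i' ≠ i → π i = 1 → π i' = 0 := by
  decide

lemma perm2_eq_one : ∀ (π : Equiv.Perm (Fin 2)) (i i' : Fin 2), i' ≠ i → π i = 0 → π i' = 1 := by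
  decide

lemma fin2_ne_zero : ∀ x : Fin 2, x ≠ 0 → x = 1 := by decide
lemma fin2_ne_one : ∀ x : Fin 2, x ≠ 1 → x = 0 := by decide
lemma fin2_cases : ∀ (w l i : Fin 2), l ≠ w → i = w ∨ i = l := by decide

def frontSet {n : ℕ} (γ : Fin 2 → Equiv.Perm (Fin n)) : Finset (Fin n) :=
  Finset.univ.filter (fun j => ¬ ∃ j', γ 0 j < γ 0 j' ∧ γ 1 j < γ 1 j')

lemma mem_frontSet {γ : Fin 2 → Equiv.Perm (Fin n)} {j : Fin n} :
    j ∈ frontSet γ ↔ ¬ ∃ j', γ 0 j < γ 0 j' ∧ γ 1 j < γ 1 j' := by simp [frontSet]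

lemma RPay_lt_iff (ω : Omega 2 n) {i i' : Fin 2} {j : Fin n} :
    RPay ω i j < RPay ω i' j ↔ ω.1 j i < ω.1 j i' := by
  unfold RPay; exact Nat.cast_lt

lemma CPay_lt_iff (ω : Omega 2 n) {i : Fin 2} {j j' : Fin n} :
    CPay ω i j < CPay ω i j' ↔ ω.2 i j < ω.2 i j' := by
  unfold CPay; exact Nat.cast_lt

lemma frontSet_nonempty (hn : 1 ≤ n) (γ : Fin 2 → Equiv.Perm (Fin n)) :
    (frontSet γ).Nonempty := by
  obtain ⟨j0, hj0, hmax⟩ := Finset.exists_max_image (univ : Finset (Fin n)) (fun j => γ 0 j)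
    ⟨⟨0, hn⟩, mem_univ _⟩
  refine ⟨j0, mem_frontSet.mpr ?_⟩
  rintro ⟨j', h1, h2⟩
  exact absurd h1 (not_lt.mpr (hmax j' (mem_univ _)))

lemma row_not_dom (ω : Omega 2 n) (Y : Finset (Fin n)) {i : Fin 2} {j₀ : Fin n}
    (hj₀ : j₀ ∈ Y) (hwin : ω.1 j₀ i = 1) : ¬ RowDomIn (RPay ω) Finset.univ Y i := by
  rintro ⟨i', -, hlt⟩
  have h := (RPay_lt_iff ω).mp (hlt j₀ hj₀)
  by_cases hii : i' = i
  · subst hii; exact lt_irrefl _ h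
  · rw [hwin, perm2_eq_zero (ω.1 j₀) i i' hii hwin] at h
    exact absurd h (by decide)

lemma row_dom (ω : Omega 2 n) {Y : Finset (Fin n)} {w l : Fin 2} (hlw : l ≠ w)
    (hwin : ∀ j ∈ Y, ω.1 j w = 1) : RowDomIn (RPay ω) Finset.univ Y l := by
  refine ⟨w, Finset.mem_univ _, fun j hj => ?_⟩
  rw [RPay_lt_iff, hwin j hj, perm2_eq_zero (ω.1 j) w l hlw (hwin j hj)]
  decide

lemma col_not_dom_sub (ω : Omega 2 n) {Y : Finset (Fin n)} {j : Fin n}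
    (hj : j ∈ frontSet ω.2) : ¬ ColDomIn (CPay ω) Finset.univ Y j := by
  rintro ⟨j', hj', hlt⟩
  exact mem_frontSet.mp hj ⟨j', (CPay_lt_iff ω).mp (hlt 0 (mem_univ _)),
    (CPay_lt_iff ω).mp (hlt 1 (mem_univ _))⟩

lemma colDom_univ_iff (ω : Omega 2 n) (j : Fin n) :
    ColDomIn (CPay ω) Finset.univ Finset.univ j
      ↔ ∃ j', ω.2 0 j < ω.2 0 j' ∧ ω.2 1 j < ω.2 1 j' := by
  constructor
  · rintro ⟨j', -, hlt⟩
    exact ⟨j', (CPay_lt_iff ω).mp (hlt 0 (mem_univ _)), (CPay_lt_iff ω).mp (hlt 1 (mem_univ _))⟩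
  · rintro ⟨j', h0, h1⟩
    refine ⟨j', mem_univ _, fun i _ => ?_⟩
    fin_cases i
    · exact (CPay_lt_iff ω).mpr h0
    · exact (CPay_lt_iff ω).mpr h1

lemma SC_spec (ω : Omega 2 n) (hn : 1 ≤ n) :
    (¬(∃ c, ∀ j ∈ frontSet ω.2, ω.1 j 0 = c) →
      survivors (RPay ω) (CPay ω) = (Finset.univ, frontSet ω.2)) ∧
    ((∃ c, ∀ j ∈ frontSet ω.2, ω.1 j 0 = c) → SC ω = 1) := by
  classical
  have hFne : (frontSet ω.2).Nonempty := frontSet_nonempty hn ω.2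
  have hcolu : (Finset.univ.filter fun j => ¬ ColDomIn (CPay ω) Finset.univ Finset.univ j)
      = frontSet ω.2 := by
    ext j
    simp only [mem_filter, mem_univ, true_and, mem_frontSet, colDom_univ_iff]
  have hcolF : ((frontSet ω.2).filter
      fun j => ¬ ColDomIn (CPay ω) Finset.univ (frontSet ω.2) j) = frontSet ω.2 :=
    filter_true_of_mem fun j hj => col_not_dom_sub ω hj
  constructor
  · intro hnc
    push_neg at hnc
    obtain ⟨j₁, hj₁F, hj₁⟩ := hnc 0
    obtain ⟨j₂, hj₂F, hj₂⟩ := hnc 1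
    have hj₁1 : ω.1 j₁ 0 = 1 := fin2_ne_zero _ hj₁
    have hj₂1 : ω.1 j₂ 1 = 1 := perm2_eq_one (ω.1 j₂) 0 1 (by decide) (fin2_ne_one _ hj₂)
    have hrow : ∀ Y : Finset (Fin n), j₁ ∈ Y → j₂ ∈ Y →
        (Finset.univ.filter fun i => ¬ RowDomIn (RPay ω) Finset.univ Y i) = Finset.univ := by
      intro Y h1 h2
      apply filter_true_of_mem
      intro i _
      fin_cases i
      · exact row_not_dom ω Y h1 hj₁1
      · exact row_not_dom ω Y h2 hj₂1
    have step1 : elimStep (RPay ω) (CPay ω) (Finset.univ, Finset.univ)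
        = (Finset.univ, frontSet ω.2) := by
      unfold elimStep
      exact Prod.ext (hrow Finset.univ (mem_univ _) (mem_univ _)) hcolu
    have step2 : elimStep (RPay ω) (CPay ω) (Finset.univ, frontSet ω.2)
        = (Finset.univ, frontSet ω.2) := by
      unfold elimStep
      exact Prod.ext (hrow (frontSet ω.2) hj₁F hj₂F) hcolF
    show (elimStep (RPay ω) (CPay ω))^[2+n] (Finset.univ, Finset.univ)
        = (Finset.univ, frontSet ω.2)
    have h2n : 2 + n = (1 + n) + 1 := by omega
    rw [h2n, Function.iterate_succ_apply, step1, Function.iterate_fixed step2]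
  · rintro ⟨c, hc⟩
    have hc2 : c = 0 ∨ c = 1 := by clear hc; revert c; decide
    obtain ⟨w, l, hlw, hwin⟩ : ∃ w l : Fin 2, l ≠ w ∧ ∀ j ∈ frontSet ω.2, ω.1 j w = 1 := by
      rcases hc2 with rfl | rfl
      · exact ⟨1, 0, by decide, fun j hj => perm2_eq_one (ω.1 j) 0 1 (by decide) (hc j hj)⟩
      · exact ⟨0, 1, by decide, fun j hj => hc j hj⟩
    obtain ⟨js, hjs, hmax⟩ := Finset.exists_max_image (frontSet ω.2) (fun j => ω.2 w j) hFne
    have hrow_single : ∀ Y : Finset (Fin n), Y.Nonempty →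
        (({w} : Finset (Fin 2)).filter fun i => ¬ RowDomIn (RPay ω) {w} Y i) = {w} := by
      intro Y hY
      apply filter_true_of_mem
      intro i hi
      rw [mem_singleton] at hi; subst hi
      rintro ⟨i', hi', hlt⟩
      rw [mem_singleton] at hi'; subst hi'
      obtain ⟨j₀, hj₀⟩ := hY
      exact lt_irrefl _ (hlt j₀ hj₀)
    have hcol_max : ∀ (S : Finset (Fin n)) (hjsS : js ∈ S),
        (∀ j ∈ S, ω.2 w j ≤ ω.2 w js) →
        (S.filter fun j => ¬ ColDomIn (CPay ω) {w} S j) = {js} := by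
      intro S hjsS hmx
      ext j
      simp only [mem_filter, mem_singleton]
      constructor
      · rintro ⟨hjS, hnd⟩
        by_contra hne
        refine hnd ⟨js, hjsS, fun i hi => ?_⟩
        rw [mem_singleton] at hi
        rw [hi, CPay_lt_iff]
        have hne2 : ω.2 w j ≠ ω.2 w js := fun hv => hne (Equiv.injective (ω.2 w) hv)
        exact lt_of_le_of_ne (hmx j hjS) hne2
      · rintro rfl
        refine ⟨hjsS, ?_⟩
        rintro ⟨j', hj', hlt⟩
        have := (CPay_lt_iff ω).mp (hlt w (mem_singleton_self w))
        exact absurd this (not_lt.mpr (hmx j' hj'))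
    have hfixT : elimStep (RPay ω) (CPay ω) ({w}, {js}) = ({w}, {js}) := by
      unfold elimStep
      refine Prod.ext (hrow_single _ ⟨js, mem_singleton_self js⟩) ?_
      exact hcol_max {js} (mem_singleton_self js)
        (fun j hj => by rw [mem_singleton] at hj; subst hj; exact le_refl _)
    have hstep_wF : elimStep (RPay ω) (CPay ω) ({w}, frontSet ω.2) = ({w}, {js}) := by
      unfold elimStep
      exact Prod.ext (hrow_single _ hFne) (hcol_max _ hjs hmax)
    have hw1 : ¬ RowDomIn (RPay ω) Finset.univ Finset.univ w := by
      obtain ⟨j₀, hj₀⟩ := hFne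
      exact row_not_dom ω Finset.univ (mem_univ _) (hwin j₀ hj₀)
    have hstep_uF : elimStep (RPay ω) (CPay ω) (Finset.univ, frontSet ω.2)
        = ({w}, frontSet ω.2) := by
      unfold elimStep
      refine Prod.ext ?_ hcolF
      ext i
      simp only [mem_filter, mem_univ, true_and, mem_singleton]
      constructor
      · intro hnd
        rcases fin2_cases w l i hlw with rfl | rfl
        · rfl
        · exact absurd (row_dom ω hlw hwin) hnd
      · rintro rfl
        obtain ⟨j₀, hj₀⟩ := hFne
        exact row_not_dom ω _ hj₀ (hwin j₀ hj₀)
    have step3 : (elimStep (RPay ω) (CPay ω))^[3] (Finset.univ, Finset.univ) = ({w}, {js}) := by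
      have h1 : elimStep (RPay ω) (CPay ω) (Finset.univ, Finset.univ)
          = (Finset.univ.filter fun i => ¬ RowDomIn (RPay ω) Finset.univ Finset.univ i,
             frontSet ω.2) := by
        unfold elimStep
        exact Prod.ext rfl hcolu
      show elimStep (RPay ω) (CPay ω) (elimStep (RPay ω) (CPay ω)
        (elimStep (RPay ω) (CPay ω) (Finset.univ, Finset.univ))) = ({w}, {js})
      by_cases hl : RowDomIn (RPay ω) Finset.univ Finset.univ l
      · have hX : (Finset.univ.filter fun i => ¬ RowDomIn (RPay ω) Finset.univ Finset.univ i)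
            = {w} := by
          ext i
          simp only [mem_filter, mem_univ, true_and, mem_singleton]
          constructor
          · intro hnd
            rcases fin2_cases w l i hlw with rfl | rfl
            · rfl
            · exact absurd hl hnd
          · rintro rfl; exact hw1
        rw [h1, hX, hstep_wF, hfixT]
      · have hX : (Finset.univ.filter fun i => ¬ RowDomIn (RPay ω) Finset.univ Finset.univ i)
            = Finset.univ := by
          apply filter_true_of_mem
          intro i _
          rcases fin2_cases w l i hlw with rfl | rfl
          · exact hw1
          · exact hl
        rw [h1, hX, hstep_uF, hstep_wF]
    have hsurv : survivors (RPay ω) (CPay ω) = ({w}, {js}) := by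
      show (elimStep (RPay ω) (CPay ω))^[2+n] (Finset.univ, Finset.univ) = ({w}, {js})
      have h2n : 2 + n = (n - 1) + 3 := by omega
      rw [h2n, Function.iterate_add_apply, step3, Function.iterate_fixed hfixT]
    show (survivors (RPay ω) (CPay ω)).2.card = 1
    rw [hsurv]
    exact Finset.card_singleton js

end S8

namespace S8
open Finset Equiv

variable {n : ℕ}

lemma perm2_count : ∀ c : Fin 2,
    ((univ : Finset (Equiv.Perm (Fin 2))).filter (fun π => π 0 = c)).card = 1 := by decide

lemma front_rtl (γ : Fin 2 → Equiv.Perm (Fin n)) :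
    (frontSet γ).card = rtl (γ 1 * (γ 0)⁻¹) := by
  apply Finset.card_bij (fun j _ => γ 0 j)
  · intro j hj
    rw [mem_rtlSet]
    intro b hb
    have hτj : (γ 1 * (γ 0)⁻¹) (γ 0 j) = γ 1 j := by simp
    have hτb : (γ 1 * (γ 0)⁻¹) b = γ 1 ((γ 0)⁻¹ b) := rfl
    rw [hτj, hτb]
    have hb' : γ 0 j < γ 0 ((γ 0)⁻¹ b) := by simpa using hb
    have hnot := mem_frontSet.mp hj
    have h1 : ¬ γ 1 j < γ 1 ((γ 0)⁻¹ b) := fun h => hnot ⟨(γ 0)⁻¹ b, hb', h⟩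
    have hne : γ 1 ((γ 0)⁻¹ b) ≠ γ 1 j := by
      intro h
      have : (γ 0)⁻¹ b = j := (γ 1).injective h
      rw [this] at hb'
      exact lt_irrefl _ hb'
    exact lt_of_le_of_ne (not_lt.mp h1) hne
  · intro j1 h1 j2 h2 heq
    exact (γ 0).injective heq
  · intro a ha
    refine ⟨(γ 0)⁻¹ a, ?_, by simp⟩
    rw [mem_frontSet]
    rintro ⟨j', hlt0, hlt1⟩
    rw [mem_rtlSet] at ha
    have h := ha (γ 0 j') (by simpa using hlt0)
    have hj : (γ 1 * (γ 0)⁻¹) (γ 0 j') = γ 1 j' := by simp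
    have ha' : (γ 1 * (γ 0)⁻¹) a = γ 1 ((γ 0)⁻¹ a) := rfl
    rw [hj, ha'] at h
    exact absurd hlt1 (not_lt.mpr (le_of_lt h))

lemma card_filter_prod2 {α β : Type*} [Fintype α] [Fintype β] [DecidableEq β]
    (P : α → β → Prop) [∀ a b, Decidable (P a b)] :
    ((univ : Finset (α × β)).filter (fun p => P p.1 p.2)).card
      = ∑ b : β, ((univ : Finset α).filter (fun a => P a b)).card := by
  rw [Finset.card_eq_sum_card_fiberwise (f := Prod.snd) (t := univ) (fun x _ => mem_univ _)]
  refine Finset.sum_congr rfl fun b _ => ?_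
  refine Finset.card_bij' (fun p _ => p.1) (fun a _ => (a, b)) ?_ ?_ ?_ ?_
  · intro p hp
    obtain ⟨x, y⟩ := p
    simp only [Finset.mem_filter, Finset.mem_univ, true_and] at hp ⊢
    exact hp.2 ▸ hp.1
  · intro a ha
    simp only [Finset.mem_filter, Finset.mem_univ, true_and, and_true] at ha ⊢
    exact ha
  · intro p hp
    obtain ⟨x, y⟩ := p
    simp only [Finset.mem_filter, Finset.mem_univ, true_and] at hp
    show (x, b) = (x, y)
    rw [hp.2]
  · intro a ha; rfl

lemma front_count (k : ℕ) :
    ((univ : Finset (Fin 2 → Equiv.Perm (Fin n))).filter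
      (fun γ => (frontSet γ).card = k)).card = n.factorial * stirling1 n k := by
  have hbij : ((univ : Finset (Fin 2 → Equiv.Perm (Fin n))).filter
      (fun γ => (frontSet γ).card = k)).card
      = ((univ : Finset (Equiv.Perm (Fin n) × Equiv.Perm (Fin n))).filter
          (fun p => rtl p.2 = k)).card := by
    refine Finset.card_bij' (fun γ _ => (γ 0, γ 1 * (γ 0)⁻¹))
      (fun p _ => fun i => if i = 0 then p.1 else p.2 * p.1) ?_ ?_ ?_ ?_
    · intro γ hγ
      simp only [mem_filter, mem_univ, true_and] at hγ ⊢
      rw [← front_rtl]; exact hγ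
    · intro p hp
      simp only [mem_filter, mem_univ, true_and] at hp ⊢
      rw [front_rtl]
      simpa using hp
    · intro γ hγ
      funext i
      rcases fin2_cases 0 1 i (by decide) with rfl | rfl
      · simp
      · simp
    · intro p hp
      obtain ⟨p1, p2⟩ := p
      simp
  rw [hbij]
  refine Eq.trans (card_filter_prod (fun (_ : Equiv.Perm (Fin n)) (b : Equiv.Perm (Fin n)) =>
    rtl b = k)) ?_
  rw [Finset.sum_congr rfl (fun a _ => card_rtl n k), Finset.sum_const, Finset.card_univ,
    Fintype.card_perm, Fintype.card_fin, smul_eq_mul]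

lemma fixedCount (S : Finset (Fin n)) (c : Fin 2) :
    ((univ : Finset (Fin n → Equiv.Perm (Fin 2))).filter
      (fun ρ => ∀ j ∈ S, ρ j 0 = c)).card = 2 ^ (n - S.card) := by
  have hset : (univ : Finset (Fin n → Equiv.Perm (Fin 2))).filter (fun ρ => ∀ j ∈ S, ρ j 0 = c)
      = Fintype.piFinset (fun j => if j ∈ S then
          (univ : Finset (Equiv.Perm (Fin 2))).filter (fun π => π 0 = c) else univ) := by
    ext ρ
    simp only [mem_filter, mem_univ, true_and, Fintype.mem_piFinset]
    constructor
    · intro h j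
      by_cases hj : j ∈ S
      · simp [hj, h j hj]
      · simp [hj]
    · intro h j hj
      have := h j
      simp only [if_pos hj, mem_filter, mem_univ, true_and] at this
      exact this
  rw [hset, Fintype.card_piFinset]
  have hprod : ∀ j ∈ (univ : Finset (Fin n)), (if j ∈ S then
      (univ : Finset (Equiv.Perm (Fin 2))).filter (fun π => π 0 = c) else univ).card
      = if j ∈ S then 1 else 2 := by
    intro j _
    split
    · exact perm2_count c
    · rw [Finset.card_univ, Fintype.card_perm, Fintype.card_fin]; rfl
  rw [Finset.prod_congr rfl hprod, Finset.prod_ite, Finset.prod_const_one, one_mul,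
    Finset.prod_const]
  have hf : (univ : Finset (Fin n)).filter (fun x => ¬ x ∈ S) = univ \ S := by
    ext x; simp
  rw [hf, Finset.card_sdiff_of_subset (Finset.subset_univ S), Finset.card_univ, Fintype.card_fin]

lemma constCount (S : Finset (Fin n)) (hS : S.Nonempty) :
    ((univ : Finset (Fin n → Equiv.Perm (Fin 2))).filter
      (fun ρ => ∃ c, ∀ j ∈ S, ρ j 0 = c)).card = 2 * 2 ^ (n - S.card) := by
  have hsplit : (univ : Finset (Fin n → Equiv.Perm (Fin 2))).filter
        (fun ρ => ∃ c, ∀ j ∈ S, ρ j 0 = c)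
      = ((univ : Finset (Fin n → Equiv.Perm (Fin 2))).filter (fun ρ => ∀ j ∈ S, ρ j 0 = 0))
        ∪ ((univ : Finset (Fin n → Equiv.Perm (Fin 2))).filter (fun ρ => ∀ j ∈ S, ρ j 0 = 1)) := by
    ext ρ
    simp only [mem_filter, mem_univ, true_and, mem_union]
    constructor
    · rintro ⟨c, hc⟩
      rcases (show c = 0 ∨ c = 1 by clear hc; revert c; decide) with rfl | rfl
      · exact Or.inl hc
      · exact Or.inr hc
    · rintro (h | h)
      exacts [⟨0, h⟩, ⟨1, h⟩]
  rw [hsplit, Finset.card_union_of_disjoint, fixedCount, fixedCount]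
  · ring
  · obtain ⟨j₀, hj₀⟩ := hS
    rw [Finset.disjoint_left]
    intro ρ h0 h1
    simp only [mem_filter, mem_univ, true_and] at h0 h1
    have := (h0 j₀ hj₀).symm.trans (h1 j₀ hj₀)
    exact absurd this (by decide)

lemma nonconstCount (S : Finset (Fin n)) (hS : S.Nonempty) :
    ((univ : Finset (Fin n → Equiv.Perm (Fin 2))).filter
      (fun ρ => ¬ ∃ c, ∀ j ∈ S, ρ j 0 = c)).card = 2^n - 2 * 2 ^ (n - S.card) := by
  have huniv : (univ : Finset (Fin n → Equiv.Perm (Fin 2))).card = 2^n := by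
    rw [Finset.card_univ, Fintype.card_fun, Fintype.card_perm, Fintype.card_fin,
      Fintype.card_fin]
    norm_num [Nat.factorial]
  rw [Finset.filter_not, Finset.card_sdiff_of_subset (Finset.filter_subset _ _), constCount S hS, huniv]

end S8

namespace S8
open Finset Equiv

variable {n : ℕ}

lemma SC_eq_one_iff (ω : Omega 2 n) (hn : 1 ≤ n) :
    SC ω = 1 ↔ (∃ c, ∀ j ∈ frontSet ω.2, ω.1 j 0 = c) := by
  obtain ⟨hnc, hcst⟩ := SC_spec ω hn
  constructor
  · intro h1
    by_contra hno
    have hs := hnc hno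
    have hcard : SC ω = (frontSet ω.2).card := by unfold SC; rw [hs]
    push_neg at hno
    obtain ⟨j₁, hj₁F, hj₁⟩ := hno 0
    obtain ⟨j₂, hj₂F, hj₂⟩ := hno 1
    have hne : j₁ ≠ j₂ := by
      intro h
      subst h
      exact hj₂ (fin2_ne_zero _ hj₁)
    have h2 : 2 ≤ (frontSet ω.2).card := Finset.one_lt_card.mpr ⟨j₁, hj₁F, j₂, hj₂F, hne⟩
    omega
  · exact hcst

lemma SC_eq_k_iff (ω : Omega 2 n) (hn : 1 ≤ n) (k : ℕ) (hk : 2 ≤ k) :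
    SC ω = k ↔ ((frontSet ω.2).card = k ∧ ¬ ∃ c, ∀ j ∈ frontSet ω.2, ω.1 j 0 = c) := by
  obtain ⟨hnc, hcst⟩ := SC_spec ω hn
  by_cases hc : ∃ c, ∀ j ∈ frontSet ω.2, ω.1 j 0 = c
  · have h1 := hcst hc
    constructor
    · intro h; omega
    · rintro ⟨-, hno⟩; exact absurd hc hno
  · have hs := hnc hc
    have hcard : SC ω = (frontSet ω.2).card := by unfold SC; rw [hs]
    rw [hcard]
    exact ⟨fun h => ⟨h, hc⟩, fun h => h.1⟩

lemma cardOmega : (Fintype.card (Omega 2 n)) = 2^n * (n.factorial)^2 := by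
  rw [Fintype.card_prod, Fintype.card_fun, Fintype.card_fun, Fintype.card_perm,
    Fintype.card_perm, Fintype.card_fin, Fintype.card_fin]
  norm_num [Nat.factorial]

lemma Pr_filter (p : Omega 2 n → Prop) [DecidablePred p] :
    Pr {ω : Omega 2 n | p ω} = (((univ : Finset (Omega 2 n)).filter p).card : ℝ)
      / ((Fintype.card (Omega 2 n)) : ℝ) := by
  unfold Pr
  have hset : {ω : Omega 2 n | p ω}.toFinite.toFinset = (univ : Finset (Omega 2 n)).filter p := by
    ext ω
    simp [Set.Finite.mem_toFinset]
  rw [hset]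

lemma A1_card (hn : 1 ≤ n) :
    ((univ : Finset (Omega 2 n)).filter (fun ω => SC ω = 1)).card
      = 2 * n.factorial * Nat.doubleFactorial (2*n - 1) := by
  classical
  have h1 : (univ : Finset (Omega 2 n)).filter (fun ω => SC ω = 1)
      = (univ : Finset (Omega 2 n)).filter (fun ω => ∃ c, ∀ j ∈ frontSet ω.2, ω.1 j 0 = c) :=
    Finset.filter_congr (fun ω _ => SC_eq_one_iff ω hn)
  rw [h1]
  refine Eq.trans (card_filter_prod2 (fun (ρ : Fin n → Equiv.Perm (Fin 2))
    (γ : Fin 2 → Equiv.Perm (Fin n)) => ∃ c, ∀ j ∈ frontSet γ, ρ j 0 = c)) ?_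
  rw [Finset.sum_congr rfl (fun γ _ => constCount (frontSet γ) (frontSet_nonempty hn γ))]
  rw [← Finset.sum_fiberwise_of_maps_to (g := fun γ : Fin 2 → Equiv.Perm (Fin n) =>
    (frontSet γ).card) (t := Finset.range (n+1))
    (fun γ _ => Finset.mem_range.mpr (Nat.lt_succ_of_le
      ((Finset.card_filter_le _ _).trans (by simp))))
    (fun γ => 2 * 2 ^ (n - (frontSet γ).card))]
  have hInner : ∀ k ∈ Finset.range (n+1),
      (∑ γ ∈ (univ : Finset (Fin 2 → Equiv.Perm (Fin n))).filter
        (fun γ => (frontSet γ).card = k), 2 * 2 ^ (n - (frontSet γ).card))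
      = 2 * n.factorial * (stirling1 n k * 2^(n-k)) := by
    intro k hk
    rw [Finset.sum_congr rfl (fun γ hγ => by rw [(Finset.mem_filter.mp hγ).2])]
    rw [Finset.sum_const, front_count, smul_eq_mul]
    ring
  rw [Finset.sum_congr rfl hInner, ← Finset.mul_sum, df_identity]

lemma Ak_card (hn : 1 ≤ n) (k : ℕ) (hk2 : 2 ≤ k) :
    ((univ : Finset (Omega 2 n)).filter (fun ω => SC ω = k)).card
      = n.factorial * stirling1 n k * (2^n - 2 * 2^(n-k)) := by
  classical
  have h1 : (univ : Finset (Omega 2 n)).filter (fun ω => SC ω = k)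
      = (univ : Finset (Omega 2 n)).filter (fun ω =>
          (frontSet ω.2).card = k ∧ ¬ ∃ c, ∀ j ∈ frontSet ω.2, ω.1 j 0 = c) :=
    Finset.filter_congr (fun ω _ => SC_eq_k_iff ω hn k hk2)
  rw [h1]
  refine Eq.trans (card_filter_prod2 (fun (ρ : Fin n → Equiv.Perm (Fin 2))
    (γ : Fin 2 → Equiv.Perm (Fin n)) =>
      (frontSet γ).card = k ∧ ¬ ∃ c, ∀ j ∈ frontSet γ, ρ j 0 = c)) ?_
  have hsummand : ∀ γ : Fin 2 → Equiv.Perm (Fin n),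
      ((univ : Finset (Fin n → Equiv.Perm (Fin 2))).filter
        (fun ρ => (frontSet γ).card = k ∧ ¬ ∃ c, ∀ j ∈ frontSet γ, ρ j 0 = c)).card
      = if (frontSet γ).card = k then (2^n - 2 * 2^(n-k)) else 0 := by
    intro γ
    split
    · next h =>
      rw [Finset.filter_congr (q := fun ρ : Fin n → Equiv.Perm (Fin 2) =>
        ¬ ∃ c, ∀ j ∈ frontSet γ, ρ j 0 = c) (fun ρ _ => by simp only [h, true_and])]
      rw [nonconstCount _ (frontSet_nonempty hn γ), h]
    · next h =>
      rw [Finset.filter_false_of_mem (fun ρ _ => by simp only [h, false_and, not_false_iff]),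
        Finset.card_empty]
  rw [Finset.sum_congr rfl (fun γ _ => hsummand γ), ← Finset.sum_filter,
    Finset.sum_const, front_count, smul_eq_mul]

end S8

theorem stmt8 (n : ℕ) (hn : 1 ≤ n) :
    Pr {ω : Omega 2 n | SC ω = 1}
      = (Nat.doubleFactorial (2 * n - 1) : ℝ) / (2 ^ (n - 1) * (Nat.factorial n : ℝ)) ∧
    ∀ k : ℕ, 2 ≤ k → k ≤ n →
      Pr {ω : Omega 2 n | SC ω = k}
        = (stirling1 n k : ℝ) / (Nat.factorial n : ℝ) * (1 - 1 / 2 ^ (k - 1)) := by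
  classical
  have hnfac : ((n.factorial : ℝ)) ≠ 0 := Nat.cast_ne_zero.mpr n.factorial_ne_zero
  constructor
  · rw [S8.Pr_filter (fun ω : Omega 2 n => SC ω = 1), S8.A1_card hn, S8.cardOmega]
    have h2 : (2:ℝ)^n = 2 * 2^(n-1) := by
      rw [← pow_succ']
      congr 1
      omega
    push_cast
    rw [h2]
    have h2n1 : (2:ℝ)^(n-1) ≠ 0 := by positivity
    field_simp
  · intro k hk2 hkn
    rw [S8.Pr_filter (fun ω : Omega 2 n => SC ω = k), S8.Ak_card hn k hk2, S8.cardOmega]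
    have hle : 2 * 2^(n-k) ≤ 2^n := by
      have h : 2 * 2^(n-k) = 2^(n-k+1) := (pow_succ' 2 _).symm
      rw [h]
      exact Nat.pow_le_pow_right (by norm_num) (by omega)
    push_cast [hle]
    have h2 : (2:ℝ)^(n-k) * 2^(k-1) * 2 = 2^n := by
      rw [← pow_add, ← pow_succ]
      congr 1
      omega
    have e1 : (2:ℝ)^(k-1) ≠ 0 := by positivity
    have e2 : (2:ℝ)^n ≠ 0 := by positivity
    field_simp
    linear_combination (-(stirling1 n k : ℝ)) * h2
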